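/- For bounded linear operators A, B on a complex Hilbert space, R(A) + R(B) = R((AA* + BB*)^{1/2}). -/

import Mathlib

open ContinuousLinearMap Pointwise

local notation "⟪" x ", " y "⟫" => @inner ℂ _ _ x y

/-- A Douglas-type factorization lemma, elementwise form: if `‖f y‖ ≤ C * ‖g y‖` for all
`y`, then `R(f*) ⊆ R(g*)`.  Proved via Hahn–Banach and the Riesz representation theorem. -/
lemma douglas_range_subset {H K₁ K₂ : Type*}
    [NormedAddCommGroup H] [InnerProductSpace ℂ H] [CompleteSpace H]
    [NormedAddCommGroup K₁] [InnerProductSpace ℂ K₁] [CompleteSpace K₁]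
    [NormedAddCommGroup K₂] [InnerProductSpace ℂ K₂] [CompleteSpace K₂]
    (f : H →L[ℂ] K₁) (g : H →L[ℂ] K₂) (C : ℝ)
    (hC : ∀ y, ‖f y‖ ≤ C * ‖g y‖) :
    Set.range (adjoint f) ⊆ Set.range (adjoint g) := by
  rintro _ ⟨x, rfl⟩
  set g' : H →ₗ[ℂ] K₂ := (g : H →ₗ[ℂ] K₂) with hg'
  set μ : H →ₗ[ℂ] ℂ := ((innerSL ℂ x).comp f : H →ₗ[ℂ] ℂ) with hμ
  have hker : LinearMap.ker g' ≤ LinearMap.ker μ := by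
    intro y hy
    have hy' : g y = 0 := hy
    have hf0 : f y = 0 := norm_le_zero_iff.mp (by simpa [hy'] using hC y)
    simp [hμ, hf0]
  set lam0 : LinearMap.range g' →ₗ[ℂ] ℂ :=
    (Submodule.liftQ (LinearMap.ker g') μ hker).comp
      g'.quotKerEquivRange.symm.toLinearMap with hlam0
  have heval : ∀ (y : H) (hy : g' y ∈ LinearMap.range g'),
      lam0 ⟨g' y, hy⟩ = μ y := by
    intro y hy
    have h1 : (⟨g' y, hy⟩ : LinearMap.range g')
        = g'.quotKerEquivRange (Submodule.Quotient.mk y) := by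
      ext
      simp [LinearMap.quotKerEquivRange_apply_mk]
    rw [h1]
    simp [hlam0]
  have hbound : ∀ m : LinearMap.range g', ‖lam0 m‖ ≤ (C * ‖x‖) * ‖m‖ := by
    rintro ⟨_, y, rfl⟩
    rw [heval y ⟨y, rfl⟩]
    have h1 : ‖μ y‖ ≤ ‖x‖ * ‖f y‖ := norm_inner_le_norm x (f y)
    have h2 : ‖x‖ * ‖f y‖ ≤ ‖x‖ * (C * ‖g y‖) :=
      mul_le_mul_of_nonneg_left (hC y) (norm_nonneg x)
    have h3 : ‖(⟨g' y, ⟨y, rfl⟩⟩ : LinearMap.range g')‖ = ‖g y‖ := rfl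
    rw [h3]
    nlinarith [h1, h2]
  set lam : LinearMap.range g' →L[ℂ] ℂ := LinearMap.mkContinuous lam0 (C * ‖x‖) hbound
  obtain ⟨Λ, hΛ, -⟩ := exists_extension_norm_eq (LinearMap.range g') lam
  set z := (InnerProductSpace.toDual ℂ K₂).symm Λ with hzdef
  refine ⟨z, ?_⟩
  refine ext_inner_left ℂ fun v => ?_
  rw [adjoint_inner_right, adjoint_inner_right]
  have key : ⟪z, g v⟫ = ⟪x, f v⟫ := by
    have h1 : ⟪z, g v⟫ = Λ (g v) := InnerProductSpace.toDual_symm_apply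
    have h2 : Λ (g v) = lam ⟨g' v, ⟨v, rfl⟩⟩ := hΛ ⟨g' v, ⟨v, rfl⟩⟩
    have h3 : lam ⟨g' v, ⟨v, rfl⟩⟩ = μ v := heval v ⟨v, rfl⟩
    have h4 : μ v = ⟪x, f v⟫ := rfl
    rw [h1, h2, h3, h4]
  calc ⟪g v, z⟫ = starRingEnd ℂ ⟪z, g v⟫ := (inner_conj_symm _ _).symm
    _ = starRingEnd ℂ ⟪x, f v⟫ := by rw [key]
    _ = ⟪f v, x⟫ := inner_conj_symm _ _

/-- `R(A) + R(B) = R((A A* + B B*)^{1/2})`, the square root being characterized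
as any positive `S` with `S² = A A* + B B*`. -/
theorem range_add_range_eq_range_sqrt
    {H : Type*} [NormedAddCommGroup H] [InnerProductSpace ℂ H] [CompleteSpace H]
    (A B S : H →L[ℂ] H) (hS : S.IsPositive)
    (hS2 : S ∘L S = A ∘L adjoint A + B ∘L adjoint B) :
    Set.range A + Set.range B = Set.range S := by
  have hSa : adjoint S = S := hS.isSelfAdjoint.adjoint_eq
  let E := WithLp.prodContinuousLinearEquiv 2 ℂ H H
  let T : WithLp 2 (H × H) →L[ℂ] H := (A.coprod B).comp (E : WithLp 2 (H × H) →L[ℂ] H × H)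
  -- the adjoint of `T`
  have hadj : adjoint T = (E.symm : H × H →L[ℂ] WithLp 2 (H × H)).comp
      ((adjoint A).prod (adjoint B)) := by
    symm
    rw [eq_adjoint_iff]
    intro x y
    rw [show ((E.symm : H × H →L[ℂ] WithLp 2 (H × H)).comp
      ((adjoint A).prod (adjoint B))) x = E.symm (adjoint A x, adjoint B x) from rfl,
      WithLp.prod_inner_apply]
    rw [show T y = A (E y).1 + B (E y).2 from rfl]
    rw [inner_add_right]
    congr 1
    · exact adjoint_inner_left A (E y).1 x
    · exact adjoint_inner_left B (E y).2 x
  -- the key norm identity `‖T* y‖ = ‖S y‖`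
  have hnorm : ∀ y, ‖adjoint T y‖ = ‖S y‖ := by
    intro y
    have h1 : ⟪adjoint T y, adjoint T y⟫
        = ⟪adjoint A y, adjoint A y⟫ + ⟪adjoint B y, adjoint B y⟫ := by
      rw [hadj]
      rw [show ((E.symm : H × H →L[ℂ] WithLp 2 (H × H)).comp
        ((adjoint A).prod (adjoint B))) y = E.symm (adjoint A y, adjoint B y) from rfl]
      rw [WithLp.prod_inner_apply]
      rfl
    have h2 : ⟪S y, S y⟫
        = ⟪adjoint A y, adjoint A y⟫ + ⟪adjoint B y, adjoint B y⟫ := by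
      have := adjoint_inner_left S (S y) y
      rw [hSa] at this
      rw [this]
      rw [show S (S y) = (S ∘L S) y from rfl, hS2]
      rw [show (A ∘L adjoint A + B ∘L adjoint B) y
        = A (adjoint A y) + B (adjoint B y) from rfl]
      rw [inner_add_right, ← adjoint_inner_left A, ← adjoint_inner_left B]
    rw [inner_self_eq_norm_sq_to_K] at h1 h2
    have h3 := h1.trans h2.symm
    have h4 : ‖adjoint T y‖ ^ 2 = ‖S y‖ ^ 2 := by exact_mod_cast h3
    calc ‖adjoint T y‖ = Real.sqrt (‖adjoint T y‖ ^ 2) :=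
        (Real.sqrt_sq (norm_nonneg _)).symm
      _ = Real.sqrt (‖S y‖ ^ 2) := by rw [h4]
      _ = ‖S y‖ := Real.sqrt_sq (norm_nonneg _)
  -- the two inclusions, via the Douglas lemma
  have inc1 : Set.range T ⊆ Set.range S := by
    have := douglas_range_subset (adjoint T) S 1
      (fun y => by rw [one_mul]; exact (hnorm y).le)
    rwa [adjoint_adjoint, hSa] at this
  have inc2 : Set.range S ⊆ Set.range T := by
    have := douglas_range_subset S (adjoint T) 1
      (fun y => by rw [one_mul]; exact (hnorm y).ge)
    rwa [adjoint_adjoint, hSa] at this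
  -- `R(T) = R(A) + R(B)`
  have hrange : Set.range T = Set.range A + Set.range B := by
    ext x
    constructor
    · rintro ⟨p, rfl⟩
      rw [show T p = A (E p).1 + B (E p).2 from rfl]
      exact Set.add_mem_add ⟨_, rfl⟩ ⟨_, rfl⟩
    · intro hx
      rw [Set.mem_add] at hx
      obtain ⟨_, ⟨a, rfl⟩, _, ⟨b, rfl⟩, rfl⟩ := hx
      refine ⟨E.symm (a, b), ?_⟩
      rw [show T (E.symm (a, b)) = (A.coprod B) (E (E.symm (a, b))) from rfl,
        E.apply_symm_apply]
      rfl
  rw [← hrange]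
  exact Set.Subset.antisymm inc1 inc2
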